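/- The cubic polynomial 6a³ − 18a² + 9a − 1 has three distinct real roots. -/
import Mathlib

private lemma cubic_root_exists (a b : ℝ) (hab : a ≤ b)
    (ha : 6*a^3 - 18*a^2 + 9*a - 1 ≤ 0) (hb : 0 ≤ 6*b^3 - 18*b^2 + 9*b - 1) :
    ∃ r ∈ Set.Icc a b, 6*r^3 - 18*r^2 + 9*r - 1 = 0 := by
  have hc : ContinuousOn (fun x : ℝ => 6*x^3 - 18*x^2 + 9*x - 1) (Set.Icc a b) := by
    fun_prop
  have := intermediate_value_Icc hab hc
  have h0 : (0:ℝ) ∈ Set.Icc (6*a^3 - 18*a^2 + 9*a - 1) (6*b^3 - 18*b^2 + 9*b - 1) :=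
    ⟨ha, hb⟩
  obtain ⟨r, hr, hr0⟩ := this h0
  exact ⟨r, hr, hr0⟩

private lemma cubic_root_exists' (a b : ℝ) (hab : a ≤ b)
    (ha : 0 ≤ 6*a^3 - 18*a^2 + 9*a - 1) (hb : 6*b^3 - 18*b^2 + 9*b - 1 ≤ 0) :
    ∃ r ∈ Set.Icc a b, 6*r^3 - 18*r^2 + 9*r - 1 = 0 := by
  have hc : ContinuousOn (fun x : ℝ => 6*x^3 - 18*x^2 + 9*x - 1) (Set.Icc a b) := by
    fun_prop
  obtain ⟨r, hr, hr0⟩ := intermediate_value_Icc' hab hc (⟨hb, ha⟩ :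
    (0:ℝ) ∈ Set.Icc (6*b^3 - 18*b^2 + 9*b - 1) (6*a^3 - 18*a^2 + 9*a - 1))
  exact ⟨r, hr, hr0⟩

theorem cubic_three_distinct_real_roots :
    ∃ x y z : ℝ, x ≠ y ∧ x ≠ z ∧ y ≠ z ∧
      6*x^3 - 18*x^2 + 9*x - 1 = 0 ∧
      6*y^3 - 18*y^2 + 9*y - 1 = 0 ∧
      6*z^3 - 18*z^2 + 9*z - 1 = 0 := by
  obtain ⟨x, hx, hx0⟩ := cubic_root_exists 0 (1/5) (by norm_num) (by norm_num) (by norm_num)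
  obtain ⟨y, hy, hy0⟩ := cubic_root_exists' (1/5) 1 (by norm_num) (by norm_num) (by norm_num)
  obtain ⟨z, hz, hz0⟩ := cubic_root_exists 1 3 (by norm_num) (by norm_num) (by norm_num)
  have hx5 : x ≠ 1/5 := by
    intro h; rw [h] at hx0; norm_num at hx0
  have hy5 : y ≠ 1/5 := by
    intro h; rw [h] at hy0; norm_num at hy0
  have hy1 : y ≠ 1 := by
    intro h; rw [h] at hy0; norm_num at hy0
  have hz1 : z ≠ 1 := by
    intro h; rw [h] at hz0; norm_num at hz0
  have hxy : x < y := lt_of_le_of_ne (le_trans hx.2 hy.1) (by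
    intro h; exact hx5 (le_antisymm hx.2 (h ▸ hy.1)))
  have hyz : y < z := lt_of_le_of_ne (le_trans hy.2 hz.1) (by
    intro h; exact hy1 (le_antisymm hy.2 (h ▸ hz.1)))
  exact ⟨x, y, z, hxy.ne, (hxy.trans hyz).ne, hyz.ne, hx0, hy0, hz0⟩
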